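/- arXiv:1706.08390 — 3 statements merged into one kernel-verified Lean document; each statement's English description precedes it below -/
import Mathlib

section
/- Fix integers r ≥ 2 and m ≥ r. The polynomials g_r(x), g_{r+1}(x), ..., g_m(x), x^{m-r+1}, x^{m-r+2}, ..., x^{m-1}, where g_k(x) = ∑_{i=0}^{r-1} C(k,i)(1-x)^i x^{k-i-1}, form a basis of the vector space of real polynomials of degree at most m-1. -/
open Polynomial

private lemma aux_deg (r k : ℕ) (hk : 1 ≤ r) (hrk : r ≤ k) :
    ((∑ i ∈ Finset.range r, ((k.choose i : ℝ)) • ((1 - X) ^ i * X ^ (k - i - 1)) : ℝ[X])).degree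
      < (k : WithBot ℕ) := by
  apply lt_of_le_of_lt (degree_sum_le _ _)
  rw [Finset.sup_lt_iff (by exact_mod_cast WithBot.bot_lt_coe k)]
  intro i hi
  rw [Finset.mem_range] at hi
  apply lt_of_le_of_lt (degree_smul_le _ _)
  apply lt_of_le_of_lt (degree_mul_le _ _)
  have h1 : ((1 - X : ℝ[X]) ^ i).degree ≤ (i : WithBot ℕ) := by
    refine le_trans (degree_pow_le _ _) ?_
    have : (1 - X : ℝ[X]).degree ≤ 1 := by
      apply le_trans (degree_sub_le _ _)
      simp
    calc i • (1 - X : ℝ[X]).degree ≤ i • (1 : WithBot ℕ) := nsmul_le_nsmul_right this i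
    _ = (i : WithBot ℕ) := by simp
  refine lt_of_le_of_lt (add_le_add h1 (degree_X_pow_le _)) ?_
  rw [← Nat.cast_add, Nat.cast_lt]
  omega

private lemma aux_coeff (r k j : ℕ) (hr : 1 ≤ r) (hrk : r ≤ k) (hj : j ≤ k - r) :
    ((∑ i ∈ Finset.range r, ((k.choose i : ℝ)) • ((1 - X) ^ i * X ^ (k - i - 1)) : ℝ[X])).coeff j
      = if j = k - r then (k.choose (r - 1) : ℝ) else 0 := by
  rw [finset_sum_coeff]
  have key : ∀ i ∈ Finset.range r,
      (((k.choose i : ℝ)) • ((1 - X : ℝ[X]) ^ i * X ^ (k - i - 1))).coeff j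
        = if j = k - r ∧ i = r - 1 then (k.choose (r - 1) : ℝ) else 0 := by
    intro i hi
    rw [Finset.mem_range] at hi
    rw [coeff_smul, coeff_mul_X_pow']
    by_cases h : k - i - 1 ≤ j
    · have hi1 : i = r - 1 := by omega
      have hj1 : j = k - r := by omega
      subst hi1; subst hj1
      rw [if_pos h, if_pos ⟨rfl, rfl⟩]
      have h0 : k - r - (k - (r - 1) - 1) = 0 := by omega
      rw [h0, coeff_zero_eq_eval_zero]
      simp
    · rw [if_neg h, smul_zero, if_neg (by omega)]
  rw [Finset.sum_congr rfl key]
  by_cases hj' : j = k - r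
  · subst hj'
    simp only [eq_self_iff_true, true_and, if_pos]
    rw [Finset.sum_ite_eq' (Finset.range r) (r-1) (fun _ => (k.choose (r-1) : ℝ))]
    rw [if_pos (Finset.mem_range.mpr (by omega))]
  · simp [hj']

/-- Fix integers `r ≥ 2` and `m ≥ r`. The polynomials
`g_r, g_{r+1}, …, g_m, x^{m-r+1}, …, x^{m-1}`, where
`g_k(x) = ∑_{i=0}^{r-1} C(k,i)(1-x)^i x^(k-i-1)`, form a basis of the space of
real polynomials of degree at most `m-1` (i.e. of degree `< m`). -/
theorem stmt_3 (r m : ℕ) (hr : 2 ≤ r) (hm : r ≤ m) :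
    let g : ℕ → Polynomial ℝ := fun k =>
      ∑ i ∈ Finset.range r, (k.choose i : ℝ) • ((1 - X) ^ i * X ^ (k - i - 1))
    let v : Fin m → Polynomial ℝ := fun i =>
      if (i : ℕ) < m - r + 1 then g (r + i) else X ^ (i : ℕ)
    ∃ b : Module.Basis (Fin m) ℝ (Polynomial.degreeLT ℝ m),
      ∀ i : Fin m, (b i : Polynomial ℝ) = v i := by
  intro g v
  have hm0 : 0 < m := by omega
  -- membership
  have hmem : ∀ i : Fin m, v i ∈ degreeLT ℝ m := by
    intro i
    rw [mem_degreeLT]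
    by_cases h : (i : ℕ) < m - r + 1
    · simp only [v, if_pos h]
      refine lt_of_lt_of_le (aux_deg r (r + i) (by omega) (by omega)) ?_
      have : r + (i : ℕ) ≤ m := by omega
      exact_mod_cast this
    · simp only [v, if_neg h]
      exact lt_of_le_of_lt (degree_X_pow_le _) (by exact_mod_cast i.isLt)
  -- coefficient triangularity
  have hdiag : ∀ i : Fin m, (v i).coeff i ≠ 0 := by
    intro i
    by_cases h : (i : ℕ) < m - r + 1
    · simp only [v, if_pos h]
      have := aux_coeff r (r + i) i (by omega) (by omega) (by omega)
      rw [this, if_pos (by omega)]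
      have : 0 < (r + (i:ℕ)).choose (r-1) := Nat.choose_pos (by omega)
      positivity
    · simp only [v, if_neg h, coeff_X_pow, if_pos rfl]
      norm_num
  have hlow : ∀ i j : Fin m, (j : ℕ) < (i : ℕ) → (v i).coeff j = 0 := by
    intro i j hij
    by_cases h : (i : ℕ) < m - r + 1
    · simp only [v, if_pos h]
      have := aux_coeff r (r + i) j (by omega) (by omega) (by omega)
      rw [this, if_neg (by omega)]
    · simp only [v, if_neg h, coeff_X_pow]
      rw [if_neg (by omega : ¬((j : ℕ) = (i : ℕ)))]
  -- the matrix
  set M : Matrix (Fin m) (Fin m) ℝ := Matrix.of (fun i j => (v i).coeff j) with hM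
  have htri : M.BlockTriangular id := fun i j hij => hlow i j hij
  have hdet : M.det ≠ 0 := by
    rw [Matrix.det_of_upperTriangular htri]
    exact Finset.prod_ne_zero_iff.mpr (fun i _ => hdiag i)
  -- linear independence
  set w : Fin m → degreeLT ℝ m := fun i => ⟨v i, hmem i⟩ with hw
  have hli : LinearIndependent ℝ w := by
    have h1 : LinearIndependent ℝ (fun i => M i) :=
      Matrix.linearIndependent_rows_iff_isUnit.mpr
        ((Matrix.isUnit_iff_isUnit_det M).mpr (isUnit_iff_ne_zero.mpr hdet))
    apply LinearIndependent.of_comp (degreeLTEquiv ℝ m).toLinearMap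
    have h2 : (⇑(degreeLTEquiv ℝ m).toLinearMap ∘ w) = fun i => M i := by
      funext i; funext j; rfl
    rw [h2]; exact h1
  have hfin : FiniteDimensional ℝ (degreeLT ℝ m) :=
    Module.Finite.equiv (degreeLTEquiv ℝ m).symm
  have hcard : Fintype.card (Fin m) = Module.finrank ℝ (degreeLT ℝ m) := by
    rw [Fintype.card_fin, (degreeLTEquiv ℝ m).finrank_eq, Module.finrank_fin_fun]
  haveI : Nonempty (Fin m) := ⟨⟨0, hm0⟩⟩
  refine ⟨basisOfLinearIndependentOfCardEqFinrank hli hcard, fun i => ?_⟩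
  rw [coe_basisOfLinearIndependentOfCardEqFinrank]
end

section
/- Fix an integer r ≥ 2 and let ξ_k = (r-1)/(k(k-1)) for k ≥ r. Then ∑_{k=r}^∞ ξ_k = 1, and for every x ∈ (0,1], ∑_{k=r}^∞ ξ_k g_k(x) = 1, where g_k(x) = ∑_{i=0}^{r-1} C(k,i)(1-x)^i x^{k-i-1}. -/
open Filter Finset Topology

noncomputable def Fp (x : ℝ) (r m : ℕ) : ℝ :=
  ∑ i ∈ Finset.range r, (m.choose i : ℝ) * (1-x)^i * x^(m-i)

lemma Fp_full (x : ℝ) (m : ℕ) : Fp x (m+1) m = 1 := by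
  have h := add_pow (1-x) x m
  simp only [sub_add_cancel, one_pow] at h
  rw [Fp]
  calc ∑ i ∈ Finset.range (m+1), (m.choose i : ℝ) * (1-x)^i * x^(m-i)
      = ∑ i ∈ Finset.range (m+1), (1-x)^i * x^(m-i) * (m.choose i : ℝ) :=
        Finset.sum_congr rfl fun i _ => by ring
    _ = 1 := h.symm

lemma Fp_base (x : ℝ) (m : ℕ) : Fp x m m = 1 - (1-x)^m := by
  have h := Fp_full x m
  rw [Fp, Finset.sum_range_succ] at h
  simp only [Nat.choose_self, Nat.cast_one, Nat.sub_self, pow_zero] at h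
  rw [Fp]
  linarith

lemma Fp_nonneg (x : ℝ) (hx0 : 0 ≤ x) (hx1 : x ≤ 1) (r m : ℕ) : 0 ≤ Fp x r m := by
  refine Finset.sum_nonneg fun i _ => ?_
  have : (0:ℝ) ≤ 1 - x := by linarith
  positivity

lemma Fp_le_one (x : ℝ) (hx0 : 0 ≤ x) (hx1 : x ≤ 1) (r m : ℕ) (hrm : r ≤ m+1) :
    Fp x r m ≤ 1 := by
  have h := Fp_full x m
  rw [← h, Fp, Fp]
  refine Finset.sum_le_sum_of_subset_of_nonneg (Finset.range_subset_range.2 hrm) fun i _ _ => ?_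
  have : (0:ℝ) ≤ 1 - x := by linarith
  positivity

lemma Fp_step (x : ℝ) (s m : ℕ) (hm : s ≤ m) :
    Fp x (s+1) (m+1) = Fp x (s+1) m - (m.choose s : ℝ) * (1-x)^(s+1) * x^(m-s) := by
  have hA : Fp x (s+1) m
      = (∑ i ∈ range s, (m.choose (i+1) : ℝ) * (1-x)^(i+1) * x^(m-(i+1))) + x^m := by
    rw [Fp, Finset.sum_range_succ']
    simp
  have hS : Fp x (s+1) m
      = (∑ i ∈ range s, (m.choose i : ℝ) * (1-x)^i * x^(m-i))
        + (m.choose s : ℝ) * (1-x)^s * x^(m-s) := Finset.sum_range_succ _ _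
  have hL : Fp x (s+1) (m+1)
      = (∑ i ∈ range s, ((m.choose i : ℝ) + (m.choose (i+1) : ℝ)) * (1-x)^(i+1) * x^(m-i))
        + x^(m+1) := by
    rw [Fp, Finset.sum_range_succ']
    congr 1
    · refine Finset.sum_congr rfl fun i _ => ?_
      rw [Nat.succ_sub_succ, Nat.choose_succ_succ]
      push_cast
      ring
    · simp
  have hsplit : (∑ i ∈ range s, ((m.choose i : ℝ) + (m.choose (i+1) : ℝ)) * (1-x)^(i+1) * x^(m-i))
      = (1-x) * (∑ i ∈ range s, (m.choose i : ℝ) * (1-x)^i * x^(m-i))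
        + x * (∑ i ∈ range s, (m.choose (i+1) : ℝ) * (1-x)^(i+1) * x^(m-(i+1))) := by
    rw [Finset.mul_sum, Finset.mul_sum, ← Finset.sum_add_distrib]
    refine Finset.sum_congr rfl fun i hi => ?_
    have hi' : i < s := Finset.mem_range.1 hi
    have he : m - i = (m - (i+1)) + 1 := by omega
    rw [he, pow_succ]
    ring
  have hA' : (∑ i ∈ range s, (m.choose (i+1) : ℝ) * (1-x)^(i+1) * x^(m-(i+1)))
      = Fp x (s+1) m - x^m := by linarith
  have hS' : (∑ i ∈ range s, (m.choose i : ℝ) * (1-x)^i * x^(m-i))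
      = Fp x (s+1) m - (m.choose s : ℝ) * (1-x)^s * x^(m-s) := by linarith
  rw [hL, hsplit, hA', hS', pow_succ, pow_succ]
  ring

lemma key1 (r : ℕ) (hr : 2 ≤ r) : ∀ n : ℕ,
    ∑ j ∈ Finset.range n, ((r : ℝ) - 1) / ((j + r) * ((j + r) - 1))
      = 1 - ((r:ℝ)-1)/((n:ℝ)+r-1) := by
  have h2r : (2:ℝ) ≤ (r:ℝ) := by exact_mod_cast hr
  intro n
  induction n with
  | zero => simp; rw [div_self (by linarith)]; norm_num
  | succ n ih =>
    rw [Finset.sum_range_succ, ih]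
    have hn0 : (0:ℝ) ≤ n := Nat.cast_nonneg n
    have h1 : ((n:ℝ)+r-1) ≠ 0 := by linarith
    have h2 : ((n:ℝ)+r) ≠ 0 := by linarith
    have h3 : ((n:ℝ)+1+r-1) ≠ 0 := by linarith
    have h4 : ((n:ℝ)+1+r) ≠ 0 := by linarith
    push_cast
    field_simp
    ring

lemma key2 (r : ℕ) (hr : 2 ≤ r) (x : ℝ) (hx0 : 0 < x) (hx1 : x ≤ 1) : ∀ n : ℕ,
    ∑ j ∈ Finset.range n, ((r : ℝ) - 1) / ((j + r) * ((j + r) - 1)) *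
        (∑ i ∈ Finset.range r, ((j + r).choose i : ℝ) * (1 - x) ^ i * x ^ (j + r - i - 1))
    = 1 - ((r:ℝ)-1) * Fp x r (n+r) / (((n:ℝ)+r-1)*x)
        + (1-x)/x * Fp x (r-1) (n+(r-1)) := by
  have h2r : (2:ℝ) ≤ (r:ℝ) := by exact_mod_cast hr
  have hxne : x ≠ 0 := ne_of_gt hx0
  have hd3 : ((r:ℝ)-1) ≠ 0 := by linarith
  have hq : (1-x)^r = (1-x)^(r-1) * (1-x) := by
    conv_lhs => rw [show r = (r-1)+1 from by omega]
    rw [pow_succ]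
  intro n
  induction n with
  | zero =>
    simp only [Finset.range_zero, Finset.sum_empty, Nat.cast_zero, zero_add, Fp_base]
    rw [hq]
    field_simp
    ring
  | succ n ih =>
    have hn0 : (0:ℝ) ≤ n := Nat.cast_nonneg n
    have hd1 : ((n:ℝ)+r-1) ≠ 0 := by linarith
    have hd2 : ((n:ℝ)+r) ≠ 0 := by linarith
    rw [Finset.sum_range_succ, ih]
    have h1 : Fp x r (n+1+r) = Fp x r (n+r)
        - ((n+r).choose (r-1) : ℝ) * (1-x)^r * x^(n+1) := by
      have h := Fp_step x (r-1) (n+r) (by omega)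
      rw [show (r-1)+1 = r from by omega, show n+r-(r-1) = n+1 from by omega,
        show n+r+1 = n+1+r from by omega] at h
      exact h
    have h2 : Fp x (r-1) (n+1+(r-1)) = Fp x (r-1) (n+(r-1))
        - ((n+(r-1)).choose (r-2) : ℝ) * (1-x)^(r-1) * x^(n+1) := by
      have h := Fp_step x (r-2) (n+(r-1)) (by omega)
      rw [show (r-2)+1 = r-1 from by omega, show n+(r-1)-(r-2) = n+1 from by omega,
        show n+(r-1)+1 = n+1+(r-1) from by omega] at h
      exact h
    have hcN : (n+r) * ((n+(r-1)).choose (r-2)) = ((n+r).choose (r-1)) * (r-1) := by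
      have h := Nat.add_one_mul_choose_eq (n+(r-1)) (r-2)
      rw [show n+(r-1)+1 = n+r from by omega, show (r-2)+1 = r-1 from by omega] at h
      exact h
    have hc : ((n:ℝ)+r) * ((n+(r-1)).choose (r-2) : ℝ)
        = ((n+r).choose (r-1) : ℝ) * ((r:ℝ)-1) := by
      have h : (((n+r) * ((n+(r-1)).choose (r-2)) : ℕ) : ℝ)
          = ((((n+r).choose (r-1)) * (r-1) : ℕ) : ℝ) := by exact_mod_cast hcN
      push_cast [Nat.cast_sub (show 1 ≤ r by omega)] at h
      linarith
    have hg : (∑ i ∈ Finset.range r, ((n+r).choose i : ℝ) * (1-x)^i * x^(n+r-i-1))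
        = Fp x r (n+r) / x := by
      rw [Fp, Finset.sum_div]
      refine Finset.sum_congr rfl fun i hi => ?_
      have hi' : i < r := Finset.mem_range.1 hi
      rw [show n+r-i = (n+r-i-1)+1 from by omega, pow_succ]
      field_simp
      rw [Nat.add_sub_cancel]
    have ha : ((n+r).choose (r-1) : ℝ)
        = ((n:ℝ)+r) * ((n+(r-1)).choose (r-2) : ℝ) / ((r:ℝ)-1) := by
      field_simp
      linarith [hc]
    rw [hg, h1, h2, ha, hq]
    push_cast
    set N := (n:ℝ) with hN
    set R := (r:ℝ) with hR
    set F := Fp x r (n+r) with hF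
    set B := Fp x (r-1) (n+(r-1)) with hB
    set b := ((n+(r-1)).choose (r-2) : ℝ) with hb
    set Q := (1-x)^(r-1) with hQ
    set X := x^(n+1) with hX
    have hd4 : N+1+R-1 ≠ 0 := by rw [hN, hR]; linarith
    field_simp
    ring

lemma limA (r : ℕ) (hr : 2 ≤ r) (x : ℝ) (hx0 : 0 < x) (hx1 : x ≤ 1) :
    Tendsto (fun n : ℕ => ((r:ℝ)-1) * Fp x r (n+r) / (((n:ℝ)+r-1)*x)) atTop (𝓝 0) := by
  have h2r : (2:ℝ) ≤ (r:ℝ) := by exact_mod_cast hr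
  have hD : Tendsto (fun n : ℕ => ((n:ℝ)+r-1)*x) atTop atTop := by
    refine Tendsto.atTop_mul_const hx0 ?_
    refine (tendsto_atTop_add_const_right atTop ((r:ℝ)-1) tendsto_natCast_atTop_atTop).congr
      fun n => by ring
  refine squeeze_zero (g := fun n : ℕ => ((r:ℝ)-1) / (((n:ℝ)+r-1)*x)) (fun n => ?_) (fun n => ?_)
    (Tendsto.div_atTop (tendsto_const_nhds (x := ((r:ℝ)-1))) hD)
  · have hn0 : (0:ℝ) ≤ n := Nat.cast_nonneg n
    have hDp : 0 < ((n:ℝ)+r-1)*x := by nlinarith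
    exact div_nonneg (mul_nonneg (by linarith) (Fp_nonneg x hx0.le hx1 r (n+r))) hDp.le
  · have hn0 : (0:ℝ) ≤ n := Nat.cast_nonneg n
    have hDp : 0 < ((n:ℝ)+r-1)*x := by nlinarith
    have hFle := Fp_le_one x hx0.le hx1 r (n+r) (by omega)
    have : ((r:ℝ)-1) * Fp x r (n+r) ≤ ((r:ℝ)-1) * 1 := by
      have := Fp_nonneg x hx0.le hx1 r (n+r)
      nlinarith
    calc ((r:ℝ)-1) * Fp x r (n+r) / (((n:ℝ)+r-1)*x)
        ≤ ((r:ℝ)-1) * 1 / (((n:ℝ)+r-1)*x) := by gcongr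
      _ = ((r:ℝ)-1) / (((n:ℝ)+r-1)*x) := by rw [mul_one]

lemma limB (r : ℕ) (hr : 2 ≤ r) (x : ℝ) (hx0 : 0 < x) (hx1 : x ≤ 1) :
    Tendsto (fun n : ℕ => (1-x)/x * Fp x (r-1) (n+(r-1))) atTop (𝓝 0) := by
  rcases eq_or_lt_of_le hx1 with h1 | h1
  · subst h1
    simp
  · have hxne : x ≠ 0 := ne_of_gt hx0
    have hmain : Tendsto (fun n : ℕ => Fp x (r-1) (n+(r-1))) atTop (𝓝 0) := by
      simp only [Fp]
      have h0 : (0:ℝ) = ∑ i ∈ Finset.range (r-1), (0:ℝ) := by simp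
      rw [h0]
      refine tendsto_finset_sum _ fun i hi => ?_
      have hi' : i < r - 1 := Finset.mem_range.1 hi
      have hsum : Summable (fun m : ℕ => (m:ℝ)^i * x^m) :=
        summable_pow_mul_geometric_of_norm_lt_one i
          (by rw [Real.norm_eq_abs, abs_of_pos hx0]; exact h1)
      have hcomp : Tendsto (fun n : ℕ => (((n+r:ℕ)):ℝ)^i * x^(n+r)) atTop (𝓝 0) :=
        hsum.tendsto_atTop_zero.comp (tendsto_add_atTop_nat r)
      have hbnd : Tendsto (fun n : ℕ => ((n:ℝ)+r)^i * x^n) atTop (𝓝 0) := by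
        have := hcomp.div_const (x^r)
        rw [zero_div] at this
        refine this.congr fun n => ?_
        push_cast
        rw [pow_add]
        field_simp
      refine squeeze_zero (fun n => ?_) (fun n => ?_) hbnd
      · have hq0 : (0:ℝ) ≤ 1 - x := by linarith
        positivity
      · have hn0 : (0:ℝ) ≤ n := Nat.cast_nonneg n
        have e : n+(r-1)-i = n + (r-1-i) := by omega
        rw [e, pow_add]
        have c1 : ((n+(r-1)).choose i : ℝ) ≤ ((n:ℝ)+r)^i := by
          calc ((n+(r-1)).choose i : ℝ) ≤ (((n+(r-1)):ℕ):ℝ)^i := by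
                exact_mod_cast Nat.choose_le_pow _ _
            _ ≤ ((n:ℝ)+r)^i := by
                refine pow_le_pow_left₀ (by positivity) ?_ i
                have hrr : (((r:ℕ) - 1 : ℕ) : ℝ) ≤ (r:ℝ) := by exact_mod_cast Nat.sub_le r 1
                push_cast
                linarith
        have c2 : (1-x)^i ≤ 1 := pow_le_one₀ (by linarith) (by linarith)
        have c3 : x^(r-1-i) ≤ 1 := pow_le_one₀ hx0.le hx1
        have hq0 : (0:ℝ) ≤ 1 - x := by linarith
        calc ((n+(r-1)).choose i : ℝ) * (1-x)^i * (x^n * x^(r-1-i))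
            ≤ ((n:ℝ)+r)^i * 1 * (x^n * 1) := by
              refine mul_le_mul (mul_le_mul c1 c2 (by positivity) (by positivity)) ?_ ?_ ?_
              · exact mul_le_mul_of_nonneg_left c3 (by positivity)
              · positivity
              · positivity
          _ = ((n:ℝ)+r)^i * x^n := by ring
    have : Tendsto (fun n : ℕ => (1-x)/x * Fp x (r-1) (n+(r-1))) atTop (𝓝 ((1-x)/x * 0)) :=
      hmain.const_mul _
    simpa using this

/-- Fix an integer `r ≥ 2` and let `ξ_k = (r-1)/(k(k-1))` for `k ≥ r`
(here indexed by `k = j + r`, `j : ℕ`). Then `∑_{k=r}^∞ ξ_k = 1`, and for every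
`x ∈ (0,1]`, `∑_{k=r}^∞ ξ_k g_k(x) = 1`, where
`g_k(x) = ∑_{i=0}^{r-1} C(k,i)(1-x)^i x^(k-i-1)`. -/
theorem stmt_5 (r : ℕ) (hr : 2 ≤ r) :
    (∑' j : ℕ, ((r : ℝ) - 1) / ((j + r) * ((j + r) - 1)) = 1) ∧
    ∀ x ∈ Set.Ioc (0 : ℝ) 1,
      (∑' j : ℕ, ((r : ℝ) - 1) / ((j + r) * ((j + r) - 1)) *
        (∑ i ∈ Finset.range r,
          ((j + r).choose i : ℝ) * (1 - x) ^ i * x ^ (j + r - i - 1))) = 1 := by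
  have h2r : (2:ℝ) ≤ (r:ℝ) := by exact_mod_cast hr
  constructor
  · have hnn : ∀ j : ℕ, 0 ≤ ((r:ℝ)-1)/((j+r)*((j+r)-1)) := by
      intro j
      have : (0:ℝ) ≤ j := Nat.cast_nonneg j
      exact div_nonneg (by linarith) (mul_nonneg (by linarith) (by linarith))
    have hD : Tendsto (fun n : ℕ => (n:ℝ)+r-1) atTop atTop :=
      (tendsto_atTop_add_const_right atTop ((r:ℝ)-1) tendsto_natCast_atTop_atTop).congr
        fun n => by ring
    have hlim : Tendsto (fun n : ℕ => 1 - ((r:ℝ)-1)/((n:ℝ)+r-1)) atTop (𝓝 1) := by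
      have := (tendsto_const_nhds (x := (1:ℝ))).sub
        (Tendsto.div_atTop (tendsto_const_nhds (x := ((r:ℝ)-1))) hD)
      simpa using this
    exact ((hasSum_iff_tendsto_nat_of_nonneg hnn 1).2
      (hlim.congr fun n => (key1 r hr n).symm)).tsum_eq
  · intro x hx
    obtain ⟨hx0, hx1⟩ := hx
    have hq0 : (0:ℝ) ≤ 1 - x := by linarith
    have hnn : ∀ j : ℕ, 0 ≤ ((r:ℝ)-1)/((j+r)*((j+r)-1)) *
        (∑ i ∈ Finset.range r, ((j + r).choose i : ℝ) * (1 - x) ^ i * x ^ (j + r - i - 1)) := by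
      intro j
      have : (0:ℝ) ≤ j := Nat.cast_nonneg j
      refine mul_nonneg (div_nonneg (by linarith) (mul_nonneg (by linarith) (by linarith))) ?_
      exact Finset.sum_nonneg fun i _ =>
        mul_nonneg (mul_nonneg (Nat.cast_nonneg _) (pow_nonneg hq0 _)) (pow_nonneg hx0.le _)
    have hlim : Tendsto (fun n : ℕ =>
        1 - ((r:ℝ)-1) * Fp x r (n+r) / (((n:ℝ)+r-1)*x) + (1-x)/x * Fp x (r-1) (n+(r-1)))
        atTop (𝓝 1) := by
      have := ((tendsto_const_nhds (x := (1:ℝ))).sub (limA r hr x hx0 hx1)).add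
        (limB r hr x hx0 hx1)
      simpa using this
    exact ((hasSum_iff_tendsto_nat_of_nonneg hnn 1).2
      (hlim.congr fun n => (key2 r hr x hx0 hx1 n).symm)).tsum_eq
end

section
/- Fix integers r ≥ 2, ν ≥ 1 and let χ_k = (r-1)/(k(k-1)) for r ≤ k ≤ ν+r-1 and χ_k = 0 for k ≥ ν+r. Then g_χ(x) := ∑_{k=r}^{ν+r-1} χ_k g_k(x) is a polynomial of degree at most ν+r-2, and 1 - g_χ(x) = ∑_{k=ν+r}^∞ (r-1)/(k(k-1)) g_k(x) = x^ν P(x) for a polynomial P of degree at most r-2 satisfying P(x) > 0 for all x ∈ [0,1]. -/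
open Polynomial Topology

-- (n-k) * C(n,k) = n * C(n-1,k)
lemma nat_id (n k : ℕ) : (n - k) * n.choose k = n * (n-1).choose k := by
  rcases n with _ | m
  · simp
  · simp only [Nat.add_sub_cancel]
    rcases Nat.lt_or_ge m k with h | h
    · rcases Nat.lt_or_ge (m+1) k with h2 | h2
      · rw [Nat.choose_eq_zero_of_lt h2, Nat.choose_eq_zero_of_lt h]; ring
      · have : k = m + 1 := by omega
        subst this; simp [Nat.choose_eq_zero_of_lt]
    · have h1 := Nat.choose_succ_right_eq (m+1) k
      have h2 := Nat.add_one_mul_choose_eq m k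
      rw [mul_comm, ← h1]
      exact h2.symm

noncomputable def AA (r M i : ℕ) : ℝ :=
  (((r:ℝ) - i) * (M.choose i) - ((M-1).choose i)) / ((M:ℝ) - 1)

noncomputable def chi (r M : ℕ) : ℝ := ((r:ℝ)-1)/((M:ℝ)*((M:ℝ)-1))

lemma I1 (r M : ℕ) (hr : 2 ≤ r) (hM : r ≤ M) :
    AA r M 0 - chi r M * (M.choose 0) = AA r (M+1) 0 := by
  have hm2 : (2:ℝ) ≤ (M:ℝ) := by exact_mod_cast hr.trans hM
  have hm0 : (M:ℝ) ≠ 0 := by linarith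
  have hm1 : (M:ℝ) - 1 ≠ 0 := by linarith
  simp only [AA, chi, Nat.choose_zero_right, Nat.cast_one, Nat.cast_zero]
  push_cast
  rw [show (M:ℝ)+1-1 = M by ring]
  field_simp
  ring

lemma I3 (r M : ℕ) (hr : 2 ≤ r) (hM : r ≤ M) :
    AA r M (r-1) - chi r M * (M.choose (r-1)) = 0 := by
  obtain ⟨s, rfl⟩ : ∃ s, r = s + 2 := ⟨r - 2, by omega⟩
  obtain ⟨N, rfl⟩ : ∃ N, M = N + 1 := ⟨M - 1, by omega⟩
  have hm2 : (2:ℝ) ≤ (N:ℝ) + 1 := by exact_mod_cast hr.trans hM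
  have hm0 : ((N:ℝ) + 1) ≠ 0 := by linarith
  have hm1 : (N:ℝ) ≠ 0 := by
    have : 1 ≤ N := by omega
    exact Nat.cast_ne_zero.mpr (by omega)
  have hp : ((N+1).choose (s+1) : ℝ) = N.choose s + N.choose (s+1) := by
    exact_mod_cast congrArg Nat.cast (Nat.choose_succ_succ N s)
  have hk : ((N:ℝ)+1) * (N.choose s) = ((N+1).choose (s+1) : ℝ) * ((s:ℝ)+1) := by
    exact_mod_cast congrArg Nat.cast (Nat.add_one_mul_choose_eq N s)
  simp only [AA, chi, Nat.add_sub_cancel]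
  push_cast
  rw [show (N:ℝ)+1-1 = N by ring]
  field_simp
  linear_combination ((N:ℝ)+1)*hp + hk

lemma I2 (r M i : ℕ) (hr : 2 ≤ r) (hM : r ≤ M) (hi : i + 2 ≤ r) :
    (AA r M (i+1) - chi r M * ((M.choose (i+1)):ℝ)) + (AA r M i - chi r M * (M.choose i))
      = AA r (M+1) (i+1) := by
  have hm2 : (2:ℝ) ≤ (M:ℝ) := by exact_mod_cast hr.trans hM
  have hm0 : (M:ℝ) ≠ 0 := by linarith
  have hm1 : (M:ℝ) - 1 ≠ 0 := by linarith
  have hiM : i ≤ M := by omega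
  have hiM1 : i + 1 ≤ M := by omega
  have hE : (((M+1)).choose (i+1) : ℝ) = (M.choose i) + (M.choose (i+1)) := by
    exact_mod_cast congrArg Nat.cast (Nat.choose_succ_succ M i)
  have hD1 : ((M:ℝ) - i) * (M.choose i) = (M:ℝ) * ((M-1).choose i) := by
    have h := congrArg (Nat.cast : ℕ → ℝ) (nat_id M i)
    push_cast [Nat.cast_sub hiM] at h
    exact h
  have hD2 : ((M:ℝ) - (i+1)) * (M.choose (i+1)) = (M:ℝ) * ((M-1).choose (i+1)) := by
    have h := congrArg (Nat.cast : ℕ → ℝ) (nat_id M (i+1))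
    push_cast [Nat.cast_sub hiM1] at h
    exact h
  simp only [AA, chi, Nat.add_sub_cancel]
  push_cast
  rw [show (M:ℝ)+1-1 = M by ring]
  field_simp
  linear_combination hD1 + hD2 - ((M:ℝ)-1)*((r:ℝ)-i-1)*hE

noncomputable def ee (r i : ℕ) : Polynomial ℝ := (1-X)^i * X^(r-1-i)
noncomputable def tt (r i : ℕ) : Polynomial ℝ := (1-X)^i * X^(r-i)
noncomputable def QQ (r M : ℕ) : Polynomial ℝ := ∑ i ∈ Finset.range r, AA r M i • ee r i
noncomputable def hh (r M : ℕ) : Polynomial ℝ :=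
  ∑ i ∈ Finset.range r, ((M.choose i : ℝ)) • ee r i
noncomputable def gg (r k : ℕ) : Polynomial ℝ :=
  ∑ i ∈ Finset.range r, (k.choose i : ℝ) • ((1 - X) ^ i * X ^ (k - i - 1))

lemma ee_eq (r i : ℕ) (hi : i < r) : ee r i = tt r i + tt r (i+1) := by
  unfold ee tt
  rw [show r - i = (r-1-i) + 1 by omega, show r - (i+1) = r-1-i by omega, pow_succ, pow_succ]
  ring

lemma X_mul_ee (r i : ℕ) (hi : i < r) : X * ee r i = tt r i := by
  unfold ee tt
  rw [show r - i = (r-1-i) + 1 by omega, pow_succ]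
  ring

lemma Abase (r i : ℕ) (hr : 2 ≤ r) (hi : i < r) : AA r r i = ((r-1).choose i : ℝ) := by
  have hr1 : ((r:ℝ) - 1) ≠ 0 := by
    have : (2:ℝ) ≤ r := by exact_mod_cast hr
    linarith
  have h : ((r:ℝ) - i) * (r.choose i) = (r:ℝ) * ((r-1).choose i) := by
    have h := congrArg (Nat.cast : ℕ → ℝ) (nat_id r i)
    push_cast [Nat.cast_sub (le_of_lt hi)] at h
    exact h
  unfold AA
  rw [h]
  field_simp

lemma QQ_base (r : ℕ) (hr : 2 ≤ r) : QQ r r = 1 := by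
  unfold QQ
  have h1 : ∀ i ∈ Finset.range r, AA r r i • ee r i
      = (1-X)^i * X^(r-1-i) * ((r-1).choose i : Polynomial ℝ) := by
    intro i hi
    rw [Abase r i hr (Finset.mem_range.mp hi)]
    unfold ee
    rw [Polynomial.smul_eq_C_mul, Polynomial.C_eq_natCast]
    ring
  rw [Finset.sum_congr rfl h1]
  have h2 := add_pow (1 - X : Polynomial ℝ) X (r-1)
  rw [show r - 1 + 1 = r by omega] at h2
  simp only [sub_add_cancel, one_pow] at h2
  exact h2.symm

lemma key (r M : ℕ) (hr : 2 ≤ r) (hM : r ≤ M) :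
    QQ r M = X * QQ r (M+1) + chi r M • hh r M := by
  rw [← sub_eq_iff_eq_add]
  set b : ℕ → ℝ := fun i => AA r M i - chi r M * (M.choose i) with hb
  have lhs1 : QQ r M - chi r M • hh r M = ∑ i ∈ Finset.range r, b i • ee r i := by
    unfold QQ hh
    rw [Finset.smul_sum, ← Finset.sum_sub_distrib]
    exact Finset.sum_congr rfl fun i _ => by rw [smul_smul, ← sub_smul]
  have e1 : ∑ i ∈ Finset.range r, b i • ee r i
      = ∑ i ∈ Finset.range r, b i • tt r i + ∑ i ∈ Finset.range r, b i • tt r (i+1) := by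
    rw [← Finset.sum_add_distrib]
    exact Finset.sum_congr rfl fun i hi => by
      rw [ee_eq r i (Finset.mem_range.mp hi), smul_add]
  have e2 : ∑ i ∈ Finset.range r, b i • tt r (i+1)
      = ∑ j ∈ Finset.range (r+1), (if j = 0 then (0:ℝ) else b (j-1)) • tt r j := by
    rw [Finset.sum_range_succ' (fun j => (if j = 0 then (0:ℝ) else b (j-1)) • tt r j) r]
    simp
  have e3 : ∑ i ∈ Finset.range r, b i • tt r i
      = ∑ j ∈ Finset.range (r+1), (if j < r then b j else 0) • tt r j := by
    rw [Finset.sum_range_succ, if_neg (lt_irrefl r), zero_smul, add_zero]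
    exact Finset.sum_congr rfl fun j hj => by rw [if_pos (Finset.mem_range.mp hj)]
  have e4 : X * QQ r (M+1) = ∑ i ∈ Finset.range r, AA r (M+1) i • tt r i := by
    unfold QQ
    rw [Finset.mul_sum]
    exact Finset.sum_congr rfl fun i hi => by
      rw [mul_smul_comm, X_mul_ee r i (Finset.mem_range.mp hi)]
  have e5 : ∑ i ∈ Finset.range r, AA r (M+1) i • tt r i
      = ∑ j ∈ Finset.range (r+1), (if j < r then AA r (M+1) j else 0) • tt r j := by
    rw [Finset.sum_range_succ, if_neg (lt_irrefl r), zero_smul, add_zero]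
    exact Finset.sum_congr rfl fun j hj => by rw [if_pos (Finset.mem_range.mp hj)]
  rw [lhs1, e1, e2, e3, e4, e5, ← Finset.sum_add_distrib]
  refine Finset.sum_congr rfl fun j hj => ?_
  rw [← add_smul]
  congr 1
  have hjr : j < r + 1 := Finset.mem_range.mp hj
  match j with
  | 0 =>
    rw [if_pos (by omega : 0 < r), if_pos (by omega : 0 < r)]
    simpa [hb] using I1 r M hr hM
  | (i+1) =>
    simp only [Nat.add_sub_cancel, if_neg (Nat.succ_ne_zero i)]
    by_cases hi : i + 1 < r
    · rw [if_pos hi, if_pos hi]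
      simpa [hb] using I2 r M i hr hM (by omega)
    · rw [if_neg hi, if_neg hi, zero_add]
      have : i = r - 1 := by omega
      rw [this]
      simpa [hb] using I3 r M hr hM

lemma gg_eq (r n : ℕ) (hr : 2 ≤ r) (hn : r ≤ n) : gg r n = X^(n-r) * hh r n := by
  unfold gg hh
  rw [Finset.mul_sum]
  refine Finset.sum_congr rfl fun i hi => ?_
  have hi' : i < r := Finset.mem_range.mp hi
  rw [mul_smul_comm]
  congr 1
  rw [show n - i - 1 = (n-r) + (r-1-i) by omega, pow_add]
  unfold ee
  ring

lemma main_id (r : ℕ) (hr : 2 ≤ r) (n : ℕ) :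
    (1 : Polynomial ℝ) - ∑ k ∈ Finset.Ico r (r+n), chi r k • gg r k = X^n * QQ r (r+n) := by
  induction n with
  | zero => simp [QQ_base r hr]
  | succ n ih =>
    have hsplit : ∑ k ∈ Finset.Ico r (r+(n+1)), chi r k • gg r k
        = ∑ k ∈ Finset.Ico r (r+n), chi r k • gg r k + chi r (r+n) • gg r (r+n) := by
      rw [show r + (n+1) = (r+n)+1 by omega]
      exact Finset.sum_Ico_succ_top (by omega) _
    have step : (1 : Polynomial ℝ) - (∑ k ∈ Finset.Ico r (r+n), chi r k • gg r k
        + chi r (r+n) • gg r (r+n))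
        = X^n * QQ r (r+n) - chi r (r+n) • gg r (r+n) := by
      rw [← ih]; ring
    rw [hsplit, step, gg_eq r (r+n) hr (by omega), show r+n-r = n by omega,
      key r (r+n) hr (by omega), show r + (n+1) = (r+n)+1 by omega, pow_succ,
      mul_add, mul_smul_comm]
    ring

lemma AA_nonneg (r M i : ℕ) (hr : 2 ≤ r) (hM : r ≤ M) (hi : i < r) : 0 ≤ AA r M i := by
  have hm2 : (2:ℝ) ≤ (M:ℝ) := by exact_mod_cast hr.trans hM
  have h1 : ((M-1).choose i : ℝ) ≤ (M.choose i : ℝ) := by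
    exact_mod_cast Nat.choose_le_choose i (by omega : M - 1 ≤ M)
  have h2 : (1:ℝ) ≤ (r:ℝ) - i := by
    have : (i:ℝ) + 1 ≤ r := by exact_mod_cast hi
    linarith
  have h3 : (0:ℝ) ≤ (M.choose i : ℝ) := by positivity
  unfold AA
  apply div_nonneg _ (by linarith)
  nlinarith

lemma AA_zero (r M : ℕ) (hr : 2 ≤ r) (hM : r ≤ M) : AA r M 0 = ((r:ℝ)-1)/((M:ℝ)-1) := by
  simp [AA]

lemma AA_zero_pos (r M : ℕ) (hr : 2 ≤ r) (hM : r ≤ M) : 0 < AA r M 0 := by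
  have hm2 : (2:ℝ) ≤ (M:ℝ) := by exact_mod_cast hr.trans hM
  have hr2 : (2:ℝ) ≤ (r:ℝ) := by exact_mod_cast hr
  rw [AA_zero r M hr hM]
  apply div_pos <;> linarith

lemma AA_last_pos (r M : ℕ) (hr : 2 ≤ r) (hM : r ≤ M) : 0 < AA r M (r-1) := by
  have hm2 : (2:ℝ) ≤ (M:ℝ) := by exact_mod_cast hr.trans hM
  have hlt : (M-1).choose (r-1) < M.choose (r-1) := by
    have e1 : M = (M-1)+1 := by omega
    have e2 : r-1 = (r-2)+1 := by omega
    have hpos := Nat.choose_pos (show r-2 ≤ M-1 by omega)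
    have key : (M-1).choose (r-2) + (M-1).choose ((r-2)+1) = ((M-1)+1).choose ((r-2)+1) :=
      (Nat.choose_succ_succ _ _).symm
    rw [← e1, ← e2] at key
    omega
  have hc : ((M-1).choose (r-1) : ℝ) < (M.choose (r-1) : ℝ) := by exact_mod_cast hlt
  have hcast : (r:ℝ) - ((r-1 : ℕ):ℝ) = 1 := by
    push_cast [Nat.cast_sub (by omega : 1 ≤ r)]; ring
  unfold AA
  rw [hcast]
  apply div_pos <;> linarith

lemma ee_eval_mem (r i : ℕ) (x : ℝ) (hx : x ∈ Set.Icc (0:ℝ) 1) :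
    (ee r i).eval x ∈ Set.Icc (0:ℝ) 1 := by
  obtain ⟨h0, h1⟩ := hx
  unfold ee
  simp only [eval_mul, eval_pow, eval_sub, eval_one, eval_X]
  constructor
  · exact mul_nonneg (pow_nonneg (by linarith) i) (pow_nonneg h0 _)
  · have a1 : (1-x)^i ≤ 1 := pow_le_one₀ (by linarith) (by linarith)
    have a2 : x^(r-1-i) ≤ 1 := pow_le_one₀ h0 h1
    have b1 : (0:ℝ) ≤ (1-x)^i := pow_nonneg (by linarith) i
    have b2 : (0:ℝ) ≤ x^(r-1-i) := by positivity
    nlinarith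

lemma QQ_eval_nonneg (r M : ℕ) (hr : 2 ≤ r) (hM : r ≤ M) (x : ℝ)
    (hx : x ∈ Set.Icc (0:ℝ) 1) : 0 ≤ (QQ r M).eval x := by
  unfold QQ
  rw [eval_finset_sum]
  apply Finset.sum_nonneg
  intro i hi
  rw [eval_smul, smul_eq_mul]
  exact mul_nonneg (AA_nonneg r M i hr hM (Finset.mem_range.mp hi)) (ee_eval_mem r i x hx).1

lemma QQ_eval_pos (r M : ℕ) (hr : 2 ≤ r) (hM : r ≤ M) (x : ℝ)
    (hx : x ∈ Set.Icc (0:ℝ) 1) : 0 < (QQ r M).eval x := by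
  obtain ⟨h0, h1⟩ := hx
  have nonneg : ∀ i ∈ Finset.range r, 0 ≤ AA r M i * (ee r i).eval x := fun i hi =>
    mul_nonneg (AA_nonneg r M i hr hM (Finset.mem_range.mp hi)) (ee_eval_mem r i x ⟨h0, h1⟩).1
  have hsumeq : (QQ r M).eval x = ∑ i ∈ Finset.range r, AA r M i * (ee r i).eval x := by
    unfold QQ
    rw [eval_finset_sum]
    exact Finset.sum_congr rfl fun i _ => by rw [eval_smul, smul_eq_mul]
  rw [hsumeq]
  rcases eq_or_lt_of_le h0 with h | h
  · -- x = 0 : use i = r-1 term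
    have hmem : r - 1 ∈ Finset.range r := Finset.mem_range.mpr (by omega)
    have hterm : 0 < AA r M (r-1) * (ee r (r-1)).eval x := by
      have : (ee r (r-1)).eval x = 1 := by
        unfold ee
        rw [← h]
        simp [show r-1-(r-1) = 0 by omega]
      rw [this, mul_one]
      exact AA_last_pos r M hr hM
    exact lt_of_lt_of_le hterm (Finset.single_le_sum nonneg hmem)
  · -- x > 0 : use i = 0 term
    have hmem : 0 ∈ Finset.range r := Finset.mem_range.mpr (by omega)
    have hterm : 0 < AA r M 0 * (ee r 0).eval x := by
      apply mul_pos (AA_zero_pos r M hr hM)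
      unfold ee
      simp only [pow_zero, one_mul, eval_pow, eval_X]
      positivity
    exact lt_of_lt_of_le hterm (Finset.single_le_sum nonneg hmem)

lemma AA_le (r M i : ℕ) (hr : 2 ≤ r) (hM : r ≤ M) (hi : i < r) :
    AA r M i ≤ (r:ℝ) * (M:ℝ)^r := by
  have hm2 : (2:ℝ) ≤ (M:ℝ) := by exact_mod_cast hr.trans hM
  have hr0 : (0:ℝ) ≤ (r:ℝ) := by positivity
  have hC : (M.choose i : ℝ) ≤ (M:ℝ)^r := by
    have h1 : M.choose i ≤ M^i := Nat.choose_le_pow M i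
    have h2 : M^i ≤ M^r := Nat.pow_le_pow_right (by omega) (by omega)
    exact_mod_cast h1.trans h2
  have hC0 : (0:ℝ) ≤ (M.choose i : ℝ) := by positivity
  have hD0 : (0:ℝ) ≤ ((M-1).choose i : ℝ) := by positivity
  have hi0 : (0:ℝ) ≤ (i:ℝ) := by positivity
  unfold AA
  rw [div_le_iff₀ (by linarith : (0:ℝ) < (M:ℝ)-1)]
  have h1 : ((r:ℝ)-i)*(M.choose i) ≤ (r:ℝ)*(M.choose i) :=
    mul_le_mul_of_nonneg_right (by linarith) hC0
  have h2 : (r:ℝ)*(M.choose i) ≤ (r:ℝ)*(M:ℝ)^r := mul_le_mul_of_nonneg_left hC hr0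
  have h3 : (r:ℝ)*(M:ℝ)^r ≤ (r:ℝ)*(M:ℝ)^r*((M:ℝ)-1) := by
    have : (0:ℝ) ≤ (r:ℝ)*(M:ℝ)^r := by positivity
    nlinarith
  linarith

lemma QQ_eval_le (r M : ℕ) (hr : 2 ≤ r) (hM : r ≤ M) (x : ℝ)
    (hx : x ∈ Set.Icc (0:ℝ) 1) : (QQ r M).eval x ≤ (r:ℝ) * ((r:ℝ) * (M:ℝ)^r) := by
  have hsumeq : (QQ r M).eval x = ∑ i ∈ Finset.range r, AA r M i * (ee r i).eval x := by
    unfold QQ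
    rw [eval_finset_sum]
    exact Finset.sum_congr rfl fun i _ => by rw [eval_smul, smul_eq_mul]
  rw [hsumeq]
  have hb : ∀ i ∈ Finset.range r, AA r M i * (ee r i).eval x ≤ (r:ℝ) * (M:ℝ)^r := by
    intro i hi
    have hi' := Finset.mem_range.mp hi
    have he := ee_eval_mem r i x hx
    calc AA r M i * (ee r i).eval x ≤ AA r M i * 1 :=
          mul_le_mul_of_nonneg_left he.2 (AA_nonneg r M i hr hM hi')
    _ = AA r M i := mul_one _
    _ ≤ (r:ℝ) * (M:ℝ)^r := AA_le r M i hr hM hi'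
  calc ∑ i ∈ Finset.range r, AA r M i * (ee r i).eval x
      ≤ (Finset.range r).card • ((r:ℝ) * (M:ℝ)^r) := Finset.sum_le_card_nsmul _ _ _ hb
  _ = (r:ℝ) * ((r:ℝ) * (M:ℝ)^r) := by
      rw [Finset.card_range, nsmul_eq_mul]

lemma QQ_eval_one (r M : ℕ) (hr : 2 ≤ r) : (QQ r M).eval 1 = AA r M 0 := by
  unfold QQ
  rw [eval_finset_sum]
  rw [Finset.sum_eq_single_of_mem 0 (Finset.mem_range.mpr (by omega))]
  · rw [eval_smul, smul_eq_mul]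
    unfold ee
    simp
  · intro i _ hne
    rw [eval_smul, smul_eq_mul]
    unfold ee
    simp [zero_pow hne]

open Filter in
lemma tendsto_term (r ν : ℕ) (hr : 2 ≤ r) (x : ℝ) (hx : x ∈ Set.Icc (0:ℝ) 1) :
    Tendsto (fun N : ℕ => x^(ν+N) * (QQ r (r+ν+N)).eval x) atTop (𝓝 0) := by
  obtain ⟨h0, h1⟩ := hx
  rcases eq_or_lt_of_le h1 with heq | hlt
  · -- x = 1
    subst heq
    have hconv : Tendsto (fun N : ℕ => ((r:ℝ)-1) / (((r+ν+N : ℕ):ℝ) - 1)) atTop (𝓝 0) := by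
      apply Tendsto.div_atTop tendsto_const_nhds
      have h := tendsto_atTop_add_const_right atTop ((r:ℝ)+(ν:ℝ)-1)
        (tendsto_natCast_atTop_atTop (R := ℝ))
      refine h.congr fun N => ?_
      push_cast
      ring
    refine hconv.congr fun N => ?_
    rw [one_pow, QQ_eval_one r (r+ν+N) hr, AA_zero r (r+ν+N) hr (by omega), one_mul]
  · -- x < 1
    apply squeeze_zero' (g := fun N : ℕ =>
      ((r:ℝ) * (r:ℝ) * ((r:ℝ)+(ν:ℝ)+1)^r) * ((N:ℝ)^r * x^N))
    · filter_upwards with N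
      exact mul_nonneg (pow_nonneg h0 _)
        (QQ_eval_nonneg r (r+ν+N) hr (by omega) x ⟨h0, h1⟩)
    · filter_upwards [eventually_ge_atTop 1] with N hN
      have hM : (r:ℝ) + ν + N ≤ ((r:ℝ)+ν+1) * N := by
        have hN1 : (1:ℝ) ≤ (N:ℝ) := by exact_mod_cast hN
        nlinarith [Nat.cast_nonneg (α := ℝ) r, Nat.cast_nonneg (α := ℝ) ν]
      have t1 : x^(ν+N) ≤ x^N := by
        rw [pow_add]
        have : x^ν ≤ 1 := pow_le_one₀ h0 h1
        nlinarith [pow_nonneg h0 N, pow_nonneg h0 ν]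
      have t2 : (QQ r (r+ν+N)).eval x ≤ (r:ℝ) * ((r:ℝ) * (((r+ν+N : ℕ)):ℝ)^r) :=
        QQ_eval_le r (r+ν+N) hr (by omega) x ⟨h0, h1⟩
      have t3 : (((r+ν+N : ℕ)):ℝ)^r ≤ ((r:ℝ)+ν+1)^r * (N:ℝ)^r := by
        rw [← mul_pow]
        apply pow_le_pow_left₀ (by positivity)
        push_cast
        linarith
      have q0 : 0 ≤ (QQ r (r+ν+N)).eval x := QQ_eval_nonneg r (r+ν+N) hr (by omega) x ⟨h0, h1⟩
      have xp0 : (0:ℝ) ≤ x^N := pow_nonneg h0 N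
      calc x^(ν+N) * (QQ r (r+ν+N)).eval x
          ≤ x^N * (QQ r (r+ν+N)).eval x := mul_le_mul_of_nonneg_right t1 q0
      _ ≤ x^N * ((r:ℝ) * ((r:ℝ) * (((r+ν+N : ℕ)):ℝ)^r)) := mul_le_mul_of_nonneg_left t2 xp0
      _ ≤ x^N * ((r:ℝ) * ((r:ℝ) * (((r:ℝ)+ν+1)^r * (N:ℝ)^r))) := by
          have hr0 : (0:ℝ) ≤ (r:ℝ) := by positivity
          apply mul_le_mul_of_nonneg_left _ xp0
          apply mul_le_mul_of_nonneg_left _ hr0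
          exact mul_le_mul_of_nonneg_left t3 hr0
      _ = ((r:ℝ) * (r:ℝ) * ((r:ℝ)+(ν:ℝ)+1)^r) * ((N:ℝ)^r * x^N) := by ring
    · have habs : |x| < 1 := abs_lt.mpr ⟨by linarith, hlt⟩
      have := (tendsto_pow_const_mul_const_pow_of_abs_lt_one r habs).const_mul
        ((r:ℝ) * (r:ℝ) * ((r:ℝ)+(ν:ℝ)+1)^r)
      simpa using this

lemma gg_deg (r k : ℕ) (hr : 2 ≤ r) (hk : r ≤ k) : (gg r k).natDegree ≤ k - 1 := by
  unfold gg
  apply natDegree_sum_le_of_forall_le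
  intro i hi
  have hi' : i < r := Finset.mem_range.mp hi
  refine le_trans (natDegree_smul_le _ _) (le_trans natDegree_mul_le ?_)
  have d1 : ((1 - X : Polynomial ℝ)^i).natDegree ≤ i := by
    refine le_trans natDegree_pow_le ?_
    have h1X : (1 - X : Polynomial ℝ).natDegree = 1 := by compute_degree!
    rw [h1X]; omega
  have d2 : (X^(k-i-1) : Polynomial ℝ).natDegree ≤ k-i-1 := le_of_eq (natDegree_X_pow _)
  omega

lemma gg_eval_nonneg (r k : ℕ) (x : ℝ) (hx : x ∈ Set.Icc (0:ℝ) 1) :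
    0 ≤ (gg r k).eval x := by
  obtain ⟨h0, h1⟩ := hx
  unfold gg
  rw [eval_finset_sum]
  apply Finset.sum_nonneg
  intro i _
  rw [eval_smul, smul_eq_mul, eval_mul, eval_pow, eval_pow, eval_sub, eval_one, eval_X]
  have := pow_nonneg (show (0:ℝ) ≤ 1 - x by linarith) i
  have := pow_nonneg h0 (k-i-1)
  positivity

lemma chi_nonneg (r M : ℕ) (hr : 2 ≤ r) (hM : r ≤ M) : 0 ≤ chi r M := by
  have hm2 : (2:ℝ) ≤ (M:ℝ) := by exact_mod_cast hr.trans hM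
  have hr2 : (2:ℝ) ≤ (r:ℝ) := by exact_mod_cast hr
  unfold chi
  apply div_nonneg (by linarith)
  nlinarith

/-- For `r ≥ 2`, `ν ≥ 1` and weights `χ_k = (r-1)/(k(k-1))` for `r ≤ k ≤ ν+r-1`
(and `0` beyond): `g_χ = ∑_{k=r}^{ν+r-1} χ_k g_k` is a polynomial of degree at most
`ν+r-2`, and `1 - g_χ(x) = ∑_{k=ν+r}^∞ (r-1)/(k(k-1)) g_k(x) = x^ν P(x)` on `[0,1]`
for a polynomial `P` of degree at most `r-2` with `P > 0` on `[0,1]`. -/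
theorem stmt_14 (r ν : ℕ) (hr : 2 ≤ r) (hν : 1 ≤ ν) :
    let g : ℕ → Polynomial ℝ := fun k =>
      ∑ i ∈ Finset.range r, (k.choose i : ℝ) • ((1 - X) ^ i * X ^ (k - i - 1))
    let gχ : Polynomial ℝ :=
      ∑ k ∈ Finset.Icc r (ν + r - 1), (((r : ℝ) - 1) / (k * ((k : ℝ) - 1))) • g k
    gχ.natDegree ≤ ν + r - 2 ∧
    ∃ P : Polynomial ℝ, P.natDegree ≤ r - 2 ∧
      (∀ x ∈ Set.Icc (0 : ℝ) 1, 0 < P.eval x) ∧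
      (1 - gχ : Polynomial ℝ) = X ^ ν * P ∧
      (∀ x ∈ Set.Icc (0 : ℝ) 1,
        1 - gχ.eval x =
          ∑' j : ℕ, (((r : ℝ) - 1) / ((j + ν + r) * ((j : ℝ) + ν + r - 1))) *
            (g (j + ν + r)).eval x) := by
  intro g gχ
  have hIcc : Finset.Icc r (ν+r-1) = Finset.Ico r (r+ν) := by
    rw [← Finset.Ico_add_one_right_eq_Icc]
    congr 1
    omega
  have hgχ : gχ = ∑ k ∈ Finset.Ico r (r+ν), chi r k • gg r k := by
    show (∑ k ∈ Finset.Icc r (ν + r - 1), chi r k • gg r k) = _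
    rw [hIcc]
  have hmain := main_id r hr ν
  have heq1 : (1 - gχ : Polynomial ℝ) = X ^ ν * QQ r (r+ν) := by
    rw [hgχ]; exact hmain
  have hdeg_gχ : gχ.natDegree ≤ ν + r - 2 := by
    rw [hgχ]
    apply natDegree_sum_le_of_forall_le
    intro k hk
    obtain ⟨hk1, hk2⟩ := Finset.mem_Ico.mp hk
    exact le_trans (natDegree_smul_le _ _) (le_trans (gg_deg r k hr hk1) (by omega))
  refine ⟨hdeg_gχ, QQ r (r+ν), ?_, ?_, heq1, ?_⟩
  · -- degree of P
    have hP0pos : 0 < (QQ r (r+ν)).eval 0 :=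
      QQ_eval_pos r (r+ν) hr (by omega) 0 ⟨le_refl 0, by norm_num⟩
    have hPne : QQ r (r+ν) ≠ 0 := by
      intro h
      rw [h] at hP0pos
      simp at hP0pos
    have h1 : (1 - gχ : Polynomial ℝ).natDegree ≤ ν + r - 2 := by
      refine le_trans (natDegree_sub_le _ _) ?_
      simp only [natDegree_one, sup_le_iff]
      exact ⟨by omega, hdeg_gχ⟩
    have h2 : (X^ν * QQ r (r+ν) : Polynomial ℝ).natDegree = (QQ r (r+ν)).natDegree + ν :=
      natDegree_X_pow_mul ν hPne
    rw [heq1, h2] at h1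
    omega
  · -- positivity
    intro x hx
    exact QQ_eval_pos r (r+ν) hr (by omega) x hx
  · -- tsum
    intro x hx
    have heval : 1 - gχ.eval x = x^ν * (QQ r (r+ν)).eval x := by
      have := congrArg (eval x) heq1
      simpa using this
    have hS : ∀ n : ℕ, ∑ k ∈ Finset.Ico r (r+n), chi r k * (gg r k).eval x
        = 1 - x^n * (QQ r (r+n)).eval x := by
      intro n
      have hcongr := congrArg (eval x) (main_id r hr n)
      simp only [eval_sub, eval_one, eval_finset_sum, eval_mul, eval_pow, eval_X,
        eval_smul, smul_eq_mul] at hcongr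
      linarith
    set f : ℕ → ℝ := fun j => chi r (r+ν+j) * (gg r (r+ν+j)).eval x with hf
    have hpart : ∀ N : ℕ, ∑ j ∈ Finset.range N, f j
        = x^ν * (QQ r (r+ν)).eval x - x^(ν+N) * (QQ r (r+ν+N)).eval x := by
      intro N
      have e1 : ∑ j ∈ Finset.range N, f j
          = ∑ k ∈ Finset.Ico (r+ν) (r+ν+N), chi r k * (gg r k).eval x := by
        rw [Finset.sum_Ico_eq_sum_range]
        rw [show r+ν+N - (r+ν) = N by omega]
      have e2 := Finset.sum_Ico_consecutive (fun k => chi r k * (gg r k).eval x)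
        (show r ≤ r+ν by omega) (show r+ν ≤ r+ν+N by omega)
      have hS1 := hS ν
      have hS2 := hS (ν+N)
      rw [show r + (ν+N) = r+ν+N by omega] at hS2
      rw [e1]
      linarith
    have hf0 : ∀ j, 0 ≤ f j := fun j =>
      mul_nonneg (chi_nonneg r (r+ν+j) hr (by omega)) (gg_eval_nonneg r (r+ν+j) x hx)
    have hHasSum : HasSum f (1 - gχ.eval x) := by
      rw [hasSum_iff_tendsto_nat_of_nonneg hf0, heval]
      have ht : Filter.Tendsto (fun N : ℕ => x^ν * (QQ r (r+ν)).eval x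
          - x^(ν+N) * (QQ r (r+ν+N)).eval x) Filter.atTop
          (𝓝 (x^ν * (QQ r (r+ν)).eval x - 0)) :=
        Filter.Tendsto.sub tendsto_const_nhds (tendsto_term r ν hr x hx)
      rw [sub_zero] at ht
      exact ht.congr fun N => (hpart N).symm
    have hterm : ∀ j : ℕ, (((r : ℝ) - 1) / ((j + ν + r) * ((j : ℝ) + ν + r - 1))) *
        (g (j + ν + r)).eval x = f j := by
      intro j
      show (((r : ℝ) - 1) / ((j + ν + r) * ((j : ℝ) + ν + r - 1))) *
        (gg r (j + ν + r)).eval x = chi r (r+ν+j) * (gg r (r+ν+j)).eval x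
      rw [show j + ν + r = r + ν + j by omega]
      congr 1
      unfold chi
      push_cast
      ring
    rw [tsum_congr hterm]
    exact hHasSum.tsum_eq.symm
end
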